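/- Let (Ω, ℱ, (ℱ_t)_{t∈[0,T_N]}) be a filtered measurable space with tenor dates 0 = T_0 < T_1 < ⋯ < T_N and day-count fractions δ_i = T_{i+1} − T_i, and let P_1, …, P_N be probability measures on (Ω, ℱ). For each i let H(·, T_i) be a nonnegative (ℱ_t)-adapted process on [0,T_i], extended by H(t,T_i) := H(T_i,T_i) for t > T_i, and define ℍ(t, T_k) := ∏_{i=0}^{k} (1 + δ_i H(t, T_i))^{-1}. Assume that for every k ∈ {0,1,…,N−1} the process (ℍ(t,T_k))_{0 ≤ t ≤ T_k} is a martingale under P_{k+1}, and that ℍ(t,T_k) > 0. Then for every k ∈ {1,…,N−1} and t ≤ T_k: E_{P_k}[ ∏_{i=0}^{k-1} (1 + δ_i H(T_i,T_i))^{-1} | ℱ_t ] / E_{P_{k+1}}[ ∏_{i=0}^{k} (1 + δ_i H(T_i,T_i))^{-1} | ℱ_t ] = 1 + δ_k H(t, T_k). -/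

import Mathlib

open MeasureTheory

/-- Equation (3.13) / Proposition 3.6 of the paper: if each survival-discount
product `ℍ(·,T_k)` is a `P_{k+1}`-martingale on `[0,T_k]`, then for `1 ≤ k ≤ N−1`
and `t ≤ T_k`,
`E_{P_k}[∏_{i<k}(1+δ_iH(T_i,T_i))⁻¹ | ℱ_t] / E_{P_{k+1}}[∏_{i<k+1}(1+δ_iH(T_i,T_i))⁻¹ | ℱ_t]
  = 1 + δ_k H(t,T_k)`. -/
theorem defaultable_ratio_identity
    {Ω : Type*} {m0 : MeasurableSpace Ω}
    (N : ℕ) (hN : 2 ≤ N)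
    (T : ℕ → ℝ) (hT0 : T 0 = 0) (hT_mono : ∀ i < N, T i < T (i + 1))
    (δ : ℕ → ℝ) (hδ : ∀ i, δ i = T (i + 1) - T i)
    (ℱ : Filtration ℝ m0)
    (P : ℕ → Measure Ω)
    (hP_prob : ∀ k, 1 ≤ k → k ≤ N → IsProbabilityMeasure (P k))
    (hP_ac : ∀ j l, 1 ≤ j → j ≤ N → 1 ≤ l → l ≤ N → P j ≪ P l)
    (H : ℕ → ℝ → Ω → ℝ)
    (hH_nonneg : ∀ i t ω, 0 ≤ H i t ω)
    (hH_adapted : ∀ i t, StronglyMeasurable[ℱ t] (H i t))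
    (hH_freeze : ∀ i t, T i < t → H i t = H i (T i))
    (ℍ : ℕ → ℝ → Ω → ℝ)
    (hℍ : ∀ k t ω, ℍ k t ω = ∏ i ∈ Finset.range (k + 1), (1 + δ i * H i t ω)⁻¹)
    (hℍ_pos : ∀ k t ω, 0 < ℍ k t ω)
    (hℍ_int : ∀ k, k < N → ∀ t, 0 ≤ t → t ≤ T k → Integrable (ℍ k t) (P (k + 1)))
    (hℍ_mart : ∀ k, k < N → ∀ s t : ℝ, 0 ≤ s → s ≤ t → t ≤ T k →
      (P (k + 1))[ℍ k t | ℱ s] =ᵐ[P (k + 1)] ℍ k s) :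
    ∀ k, 1 ≤ k → k ≤ N - 1 → ∀ t : ℝ, 0 ≤ t → t ≤ T k →
      (fun ω =>
          ((P k)[fun ω' => ∏ i ∈ Finset.range k, (1 + δ i * H i (T i) ω')⁻¹ | ℱ t]) ω /
          ((P (k + 1))[fun ω' => ∏ i ∈ Finset.range (k + 1), (1 + δ i * H i (T i) ω')⁻¹ | ℱ t]) ω)
        =ᵐ[P (k + 1)] fun ω => 1 + δ k * H k t ω := by
  intro k hk1 hkN t ht0 htTk
  obtain ⟨j, rfl⟩ : ∃ j, k = j + 1 := ⟨k - 1, (Nat.succ_pred_eq_of_pos hk1).symm⟩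
  have hjN : j + 1 < N := by omega
  have hj2N : j + 2 ≤ N := by omega
  -- strict monotonicity of T on [0, N]
  have hTlt : ∀ m, m ≤ N → ∀ i, i < m → T i < T m := by
    intro m
    induction m with
    | zero => omega
    | succ n ih =>
      intro hn i hi
      rcases Nat.lt_or_ge i n with h | h
      · exact lt_trans (ih (by omega) i h) (hT_mono n (by omega))
      · have : i = n := by omega
        subst this; exact hT_mono i (by omega)
  have hT_nonneg : ∀ m, m ≤ N → 0 ≤ T m := by
    intro m hm
    rcases Nat.eq_zero_or_pos m with h | h
    · simp [h, hT0]
    · have := hTlt m hm 0 h; linarith [hT0 ▸ this]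
  haveI : IsProbabilityMeasure (P (j + 1)) := hP_prob _ (by omega) (by omega)
  haveI : IsProbabilityMeasure (P (j + 2)) := hP_prob _ (by omega) (by omega)
  -- measurability of ℍ
  have hmeas : ∀ m s, StronglyMeasurable[ℱ s] (ℍ m s) := by
    intro m s
    have he : ℍ m s = fun ω => ∏ i ∈ Finset.range (m + 1), (1 + δ i * H i s ω)⁻¹ :=
      funext fun ω => hℍ m s ω
    rw [he]
    exact Finset.stronglyMeasurable_fun_prod _ fun i _ =>
      ((measurable_const.add (((hH_adapted i s).measurable).const_mul (δ i))).inv).stronglyMeasurable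
  -- numerator function equals ℍ j (T j)
  have hnum_eq : (fun ω' => ∏ i ∈ Finset.range (j + 1), (1 + δ i * H i (T i) ω')⁻¹)
      = ℍ j (T j) := by
    funext ω
    rw [hℍ]
    refine (Finset.prod_congr rfl fun i hi => ?_).symm
    rcases Nat.lt_or_ge i j with h | h
    · rw [hH_freeze i (T j) (hTlt j (by omega) i h)]
    · have : i = j := by have := Finset.mem_range.mp hi; omega
      subst this; rfl
  -- denominator function equals ℍ (j+1) (T (j+1))
  have hden_eq : (fun ω' => ∏ i ∈ Finset.range (j + 1 + 1), (1 + δ i * H i (T i) ω')⁻¹)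
      = ℍ (j + 1) (T (j + 1)) := by
    funext ω
    rw [hℍ]
    refine (Finset.prod_congr rfl fun i hi => ?_).symm
    rcases Nat.lt_or_ge i (j + 1) with h | h
    · rw [hH_freeze i (T (j + 1)) (hTlt (j + 1) (by omega) i h)]
    · have : i = j + 1 := by have := Finset.mem_range.mp hi; omega
      subst this; rfl
  -- numerator conditional expectation
  have hnum : (P (j + 1))[fun ω' => ∏ i ∈ Finset.range (j + 1),
      (1 + δ i * H i (T i) ω')⁻¹ | ℱ t] =ᵐ[P (j + 1)] ℍ j t := by
    rw [hnum_eq]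
    rcases le_or_gt t (T j) with hle | hlt
    · exact hℍ_mart j (by omega) t (T j) ht0 hle le_rfl
    · have heq : ℍ j (T j) = ℍ j t := by
        funext ω
        rw [hℍ, hℍ]
        refine Finset.prod_congr rfl fun i hi => ?_
        have hij : i ≤ j := by have := Finset.mem_range.mp hi; omega
        have hTi : T i < t := by
          rcases Nat.lt_or_ge i j with h | h
          · exact lt_trans (hTlt j (by omega) i h) hlt
          · have : i = j := by omega
            subst this; exact hlt
        rw [hH_freeze i t hTi]
        rcases Nat.lt_or_ge i j with h | h
        · rw [hH_freeze i (T j) (hTlt j (by omega) i h)]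
        · have : i = j := by omega
          subst this; rfl
      have hint : Integrable (ℍ j t) (P (j + 1)) := by
        rw [← heq]
        exact hℍ_int j (by omega) (T j) (hT_nonneg j (by omega)) le_rfl
      rw [heq, condExp_of_stronglyMeasurable (ℱ.le t) (hmeas j t) hint]
  -- transfer to P (j+2)
  have hac : P (j + 1 + 1) ≪ P (j + 1) := hP_ac _ _ (by omega) (by omega) (by omega) (by omega)
  have hnum' : (P (j + 1))[fun ω' => ∏ i ∈ Finset.range (j + 1),
      (1 + δ i * H i (T i) ω')⁻¹ | ℱ t] =ᵐ[P (j + 1 + 1)] ℍ j t :=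
    hnum.filter_mono (Measure.ae_le_iff_absolutelyContinuous.mpr hac)
  -- denominator conditional expectation
  have hden : (P (j + 1 + 1))[fun ω' => ∏ i ∈ Finset.range (j + 1 + 1),
      (1 + δ i * H i (T i) ω')⁻¹ | ℱ t] =ᵐ[P (j + 1 + 1)] ℍ (j + 1) t := by
    rw [hden_eq]
    exact hℍ_mart (j + 1) hjN t (T (j + 1)) ht0 htTk le_rfl
  filter_upwards [hnum', hden] with ω h1 h2
  rw [h1, h2]
  -- ℍ (j+1) t ω = ℍ j t ω * (1 + δ (j+1) * H (j+1) t ω)⁻¹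
  have hsplit : ℍ (j + 1) t ω = ℍ j t ω * (1 + δ (j + 1) * H (j + 1) t ω)⁻¹ := by
    rw [hℍ, hℍ, Finset.prod_range_succ]
  have hj_pos := hℍ_pos j t ω
  have hj1_pos := hℍ_pos (j + 1) t ω
  have hx_pos : (0 : ℝ) < 1 + δ (j + 1) * H (j + 1) t ω := by
    rw [← inv_pos]
    have : (1 + δ (j + 1) * H (j + 1) t ω)⁻¹ = ℍ (j + 1) t ω / ℍ j t ω := by
      rw [hsplit, mul_div_cancel_left₀ _ hj_pos.ne']
    rw [this]
    positivity
  rw [hsplit, mul_comm, ← div_div, div_eq_mul_inv _ (1 + δ (j + 1) * H (j + 1) t ω)⁻¹,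
    inv_inv, mul_comm (ℍ j t ω), mul_div_assoc, div_self hj_pos.ne', mul_one]
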